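/- Let X be a lattice design with n runs, s factors and q levels, and let 1 ≤ t ≤ s. Then X has orthogonal strength t, i.e. for every subset u ⊆ {1,…,s} with |u| = t and every level combination x ∈ (Fin q)^u the count N_x^{(u)} equals n/q^t, if and only if Ψ_C(X; j) = 0 for all j = 1, …, t. -/

import Mathlib

open Finset

/-- The coincidence number β(x, w) = #{j : x_j = w_j} of two lattice points. -/
def coincidence {s q : ℕ} (x w : Fin s → Fin q) : ℕ :=
  (univ.filter fun j => x j = w j).card

/-- The index set of pairs 1 ≤ i < k ≤ n. -/
def pairs (n : ℕ) : Finset (Fin n × Fin n) := univ.filter fun p => p.1 < p.2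

/-- `N_x^{(u)}`: the number of runs of `X` whose `u`-coordinates equal the level
combination `x`. -/
def projCount {n s q : ℕ} (X : Fin n → Fin s → Fin q) (u : Finset (Fin s))
    (x : ↥u → Fin q) : ℕ :=
  (univ.filter fun i => ∀ j : ↥u, X i j = x j).card

/-- The Schur-combinatorial criterion
Ψ_C(X; j) = 2 ∑_{i<k} C(β(x_i,x_k), j) − C(s,j)(n²/qʲ − n). -/
noncomputable def PsiC {n s q : ℕ} (X : Fin n → Fin s → Fin q) (j : ℕ) : ℝ :=
  2 * ∑ p ∈ pairs n, ((coincidence (X p.1) (X p.2)).choose j : ℝ)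
    - (s.choose j : ℝ) * ((n : ℝ) ^ 2 / (q : ℝ) ^ j - n)

lemma sum_projCount {n s q : ℕ} (X : Fin n → Fin s → Fin q) (u : Finset (Fin s)) :
    ∑ x : ↥u → Fin q, projCount X u x = n := by
  have h := Finset.card_eq_sum_card_fiberwise
    (f := fun i : Fin n => fun j : ↥u => X i j) (s := univ) (t := univ)
    (fun x _ => mem_univ _)
  rw [card_univ, Fintype.card_fin] at h
  refine Eq.trans ?_ h.symm
  apply Finset.sum_congr rfl
  intro x _
  unfold projCount
  congr 1
  apply filter_congr
  intro i _
  simp [funext_iff]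

lemma key_count {n s q : ℕ} (X : Fin n → Fin s → Fin q) (j : ℕ) :
    ∑ u ∈ powersetCard j (univ : Finset (Fin s)), ∑ x : ↥u → Fin q,
      (projCount X u x) ^ 2
    = ∑ i : Fin n, ∑ k : Fin n, (coincidence (X i) (X k)).choose j := by
  have h1 : ∀ (u : Finset (Fin s)) (x : ↥u → Fin q), (projCount X u x) ^ 2 =
      ∑ i : Fin n, ∑ k : Fin n,
        (if (∀ j : ↥u, X i j = x j) ∧ (∀ j : ↥u, X k j = x j) then 1 else 0) := by
    intro u x
    rw [sq, projCount, card_filter, Finset.sum_mul_sum]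
    refine Finset.sum_congr rfl fun i _ => Finset.sum_congr rfl fun k _ => ?_
    split_ifs <;> simp_all
  have h2 : ∀ (u : Finset (Fin s)) (i k : Fin n), (∑ x : ↥u → Fin q,
      if (∀ j : ↥u, X i j = x j) ∧ (∀ j : ↥u, X k j = x j) then 1 else 0)
      = (if (∀ j' : ↥u, X i j' = X k j') then 1 else 0) := by
    intro u i k
    have hiff : ∀ x : ↥u → Fin q,
        ((∀ j : ↥u, X i j = x j) ∧ (∀ j : ↥u, X k j = x j)) ↔
        (x = fun j : ↥u => X i j) ∧ (∀ j : ↥u, X i j = X k j) := by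
      intro x
      constructor
      · rintro ⟨h1', h2'⟩
        refine ⟨funext fun j => (h1' j).symm, fun j => (h1' j).trans (h2' j).symm⟩
      · rintro ⟨rfl, h2'⟩
        exact ⟨fun j => rfl, fun j => ((h2' j).symm : X k j.1 = X i j.1)⟩
    rw [Finset.sum_congr rfl fun x _ => if_congr (hiff x) rfl rfl]
    simp_rw [ite_and, Finset.sum_ite_eq' Finset.univ (fun j : ↥u => X i j)]
    simp
  have h3 : ∀ u ∈ powersetCard j (univ : Finset (Fin s)),
      ∑ x : ↥u → Fin q, (projCount X u x) ^ 2 =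
      ∑ i : Fin n, ∑ k : Fin n, (if (∀ j' : ↥u, X i j' = X k j') then 1 else 0) := by
    intro u _
    simp_rw [h1]
    rw [Finset.sum_comm]
    refine Finset.sum_congr rfl fun i _ => ?_
    rw [Finset.sum_comm]
    exact Finset.sum_congr rfl fun k _ => h2 u i k
  rw [Finset.sum_congr rfl h3, Finset.sum_comm]
  refine Finset.sum_congr rfl fun i _ => ?_
  rw [Finset.sum_comm]
  refine Finset.sum_congr rfl fun k _ => ?_
  rw [← Finset.card_filter]
  have hfil : (powersetCard j (univ : Finset (Fin s))).filter
      (fun u : Finset (Fin s) => ∀ j' : ↥u, X i j'.1 = X k j'.1)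
      = powersetCard j (univ.filter fun j' => X i j' = X k j') := by
    ext u
    simp only [mem_filter, mem_powersetCard]
    constructor
    · rintro ⟨⟨-, hc⟩, h⟩
      exact ⟨fun a ha => mem_filter.2 ⟨mem_univ _, h ⟨a, ha⟩⟩, hc⟩
    · rintro ⟨h, hc⟩
      exact ⟨⟨subset_univ u, hc⟩, fun j' => (mem_filter.1 (h j'.2)).2⟩
  rw [hfil, card_powersetCard]
  rfl

lemma double_sum_split {n : ℕ} (g : Fin n → Fin n → ℕ) (hsym : ∀ i k, g i k = g k i) :
    ∑ i : Fin n, ∑ k : Fin n, g i k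
    = 2 * ∑ p ∈ pairs n, g p.1 p.2 + ∑ i : Fin n, g i i := by
  rw [← Finset.sum_product' (s := univ) (t := univ) (f := g), Finset.univ_product_univ]
  rw [← Finset.sum_filter_add_sum_filter_not (univ : Finset (Fin n × Fin n))
    (fun p => p.1 < p.2) (fun p => g p.1 p.2)]
  rw [← Finset.sum_filter_add_sum_filter_not
    ((univ : Finset (Fin n × Fin n)).filter fun p => ¬ p.1 < p.2)
    (fun p => p.2 < p.1) (fun p => g p.1 p.2)]
  have e1 : ((univ : Finset (Fin n × Fin n)).filter fun p => ¬ p.1 < p.2).filter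
      (fun p => p.2 < p.1) = (univ : Finset (Fin n × Fin n)).filter fun p => p.2 < p.1 := by
    rw [filter_filter]
    apply filter_congr
    intro p _
    constructor
    · exact fun h => h.2
    · exact fun h => ⟨not_lt.2 h.le, h⟩
  have e2 : (((univ : Finset (Fin n × Fin n)).filter fun p => ¬ p.1 < p.2).filter
      fun p => ¬ p.2 < p.1) = (univ : Finset (Fin n × Fin n)).filter fun p => p.1 = p.2 := by
    rw [filter_filter]
    apply filter_congr
    intro p _
    simp only [not_lt]
    constructor
    · exact fun h => le_antisymm h.2 h.1
    · exact fun h => ⟨h.ge, h.le⟩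
  rw [e1, e2]
  have e3 : ∑ p ∈ (univ : Finset (Fin n × Fin n)).filter (fun p => p.2 < p.1),
      g p.1 p.2 = ∑ p ∈ pairs n, g p.1 p.2 := by
    refine Finset.sum_nbij' Prod.swap Prod.swap ?_ ?_ ?_ ?_ ?_ <;>
      simp [pairs, hsym _ _]
  have e4 : ∑ p ∈ (univ : Finset (Fin n × Fin n)).filter (fun p => p.1 = p.2),
      g p.1 p.2 = ∑ i : Fin n, g i i := by
    refine Finset.sum_nbij' Prod.fst (fun i => (i, i)) ?_ ?_ ?_ ?_ ?_ <;> simp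
  rw [e3, e4, pairs]
  ring

lemma coincidence_comm {s q : ℕ} (x w : Fin s → Fin q) :
    coincidence x w = coincidence w x := by
  unfold coincidence
  congr 1
  ext j
  simp [eq_comm]

lemma coincidence_self {s q : ℕ} (x : Fin s → Fin q) : coincidence x x = s := by
  unfold coincidence
  simp

/-- The key identity: Ψ_C(X; j) is a sum of squares. -/
lemma psiC_eq_sum_sq {n s q : ℕ} (hq0 : (q : ℝ) ≠ 0) (X : Fin n → Fin s → Fin q) (j : ℕ) :
    PsiC X j = ∑ u ∈ powersetCard j (univ : Finset (Fin s)), ∑ x : ↥u → Fin q,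
      ((projCount X u x : ℝ) - (n : ℝ) / (q : ℝ) ^ j) ^ 2 := by
  have hqj : ((q : ℝ) ^ j) ≠ 0 := pow_ne_zero _ hq0
  have hcardfun : ∀ u ∈ powersetCard j (univ : Finset (Fin s)),
      Fintype.card (↥u → Fin q) = q ^ j := by
    intro u hu
    rw [Fintype.card_fun, Fintype.card_fin, Fintype.card_coe,
      (mem_powersetCard.1 hu).2]
  have hvar : ∀ u ∈ powersetCard j (univ : Finset (Fin s)),
      ∑ x : ↥u → Fin q, ((projCount X u x : ℝ) - (n : ℝ) / (q : ℝ) ^ j) ^ 2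
      = (∑ x : ↥u → Fin q, ((projCount X u x : ℝ)) ^ 2) - (n : ℝ) ^ 2 / (q : ℝ) ^ j := by
    intro u hu
    have hsum : ∑ x : ↥u → Fin q, (projCount X u x : ℝ) = (n : ℝ) := by
      rw [← Nat.cast_sum, sum_projCount]
    calc ∑ x : ↥u → Fin q, ((projCount X u x : ℝ) - (n : ℝ) / (q : ℝ) ^ j) ^ 2
        = ∑ x : ↥u → Fin q, (((projCount X u x : ℝ)) ^ 2
            - (2 * ((n : ℝ) / (q : ℝ) ^ j)) * (projCount X u x : ℝ)
            + ((n : ℝ) / (q : ℝ) ^ j) ^ 2) :=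
          Finset.sum_congr rfl fun x _ => by ring
      _ = (∑ x : ↥u → Fin q, ((projCount X u x : ℝ)) ^ 2)
            - (2 * ((n : ℝ) / (q : ℝ) ^ j)) * (∑ x : ↥u → Fin q, (projCount X u x : ℝ))
            + (Fintype.card (↥u → Fin q)) • ((n : ℝ) / (q : ℝ) ^ j) ^ 2 := by
          rw [Finset.sum_add_distrib, Finset.sum_sub_distrib, ← Finset.mul_sum,
            Finset.sum_const, Finset.card_univ]
      _ = (∑ x : ↥u → Fin q, ((projCount X u x : ℝ)) ^ 2) - (n : ℝ) ^ 2 / (q : ℝ) ^ j := by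
          rw [hsum, hcardfun u hu, nsmul_eq_mul]
          push_cast
          field_simp
          ring
  rw [Finset.sum_congr rfl hvar, Finset.sum_sub_distrib, Finset.sum_const,
    card_powersetCard, card_univ, Fintype.card_fin]
  have hkey : ∑ u ∈ powersetCard j (univ : Finset (Fin s)), ∑ x : ↥u → Fin q,
      ((projCount X u x : ℝ)) ^ 2
      = 2 * (∑ p ∈ pairs n, ((coincidence (X p.1) (X p.2)).choose j : ℝ))
        + (n : ℝ) * (s.choose j : ℝ) := by
    have := key_count X j
    have hsplit := double_sum_split (fun i k => (coincidence (X i) (X k)).choose j)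
      (fun i k => by rw [coincidence_comm])
    rw [hsplit] at this
    have hc : ∀ i : Fin n, (coincidence (X i) (X i)).choose j = s.choose j := by
      intro i; rw [coincidence_self]
    simp_rw [hc, Finset.sum_const, Finset.card_univ, Fintype.card_fin] at this
    calc ∑ u ∈ powersetCard j (univ : Finset (Fin s)), ∑ x : ↥u → Fin q,
          ((projCount X u x : ℝ)) ^ 2
        = ((∑ u ∈ powersetCard j (univ : Finset (Fin s)), ∑ x : ↥u → Fin q,
          (projCount X u x) ^ 2 : ℕ) : ℝ) := by push_cast; rfl
      _ = ((2 * ∑ p ∈ pairs n, (coincidence (X p.1) (X p.2)).choose j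
          + n * s.choose j : ℕ) : ℝ) := by rw [this]; simp [smul_eq_mul]
      _ = _ := by push_cast; ring
  rw [hkey, PsiC, nsmul_eq_mul]
  push_cast
  ring

lemma projCount_step {n s q : ℕ} (X : Fin n → Fin s → Fin q) (u : Finset (Fin s))
    (a : Fin s) (ha : a ∉ u) (x : ↥u → Fin q) :
    projCount X u x = ∑ v : Fin q, projCount X (insert a u)
      (fun j => if h : (j : Fin s) ∈ u then x ⟨j, h⟩ else v) := by
  have hfib := Finset.card_eq_sum_card_fiberwise (f := fun i : Fin n => X i a)
    (s := univ.filter fun i => ∀ j : ↥u, X i j = x j) (t := univ) (fun _ _ => mem_univ _)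
  rw [projCount, hfib]
  refine Finset.sum_congr rfl fun v _ => ?_
  rw [filter_filter]
  unfold projCount
  congr 1
  apply filter_congr
  intro i _
  constructor
  · rintro ⟨h1, h2⟩ j
    show X i j = if h : (j : Fin s) ∈ u then x ⟨j, h⟩ else v
    rcases Finset.mem_insert.1 j.2 with hj | hj
    · rw [dif_neg (show ¬((j : Fin s) ∈ u) by rw [hj]; exact ha)]
      rw [show (j : Fin s) = a from hj]
      exact h2
    · rw [dif_pos hj]
      exact h1 ⟨j, hj⟩
  · intro h
    constructor
    · intro j
      have h' := h ⟨j.1, Finset.mem_insert_of_mem j.2⟩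
      dsimp only at h'
      rwa [dif_pos j.2] at h'
    · have h' := h ⟨a, Finset.mem_insert_self a u⟩
      dsimp only at h'
      rwa [dif_neg ha] at h'

/-- Strength is monotone decreasing. -/
lemma strength_mono {n s q : ℕ} (hq0 : (q : ℝ) ≠ 0) (X : Fin n → Fin s → Fin q)
    (t : ℕ) (hts : t ≤ s)
    (hU : ∀ u ∈ powersetCard t (univ : Finset (Fin s)), ∀ x : ↥u → Fin q,
        (projCount X u x : ℝ) = (n : ℝ) / (q : ℝ) ^ t) :
    ∀ j, j ≤ t → ∀ u ∈ powersetCard j (univ : Finset (Fin s)), ∀ x : ↥u → Fin q,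
        (projCount X u x : ℝ) = (n : ℝ) / (q : ℝ) ^ j := by
  have key : ∀ d j, j + d = t → ∀ u ∈ powersetCard j (univ : Finset (Fin s)),
      ∀ x : ↥u → Fin q, (projCount X u x : ℝ) = (n : ℝ) / (q : ℝ) ^ j := by
    intro d
    induction d with
    | zero => intro j hj; subst hj; exact hU
    | succ d ih =>
      intro j hj u hu x
      have hcard : u.card = j := (mem_powersetCard.1 hu).2
      have hjs : j < s := by omega
      have hne : u ≠ univ := by
        intro h
        rw [h, card_univ, Fintype.card_fin] at hcard
        omega
      obtain ⟨a, -, ha⟩ := Finset.exists_of_ssubset (ssubset_univ_iff.2 hne)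
      have hins : insert a u ∈ powersetCard (j + 1) (univ : Finset (Fin s)) := by
        rw [mem_powersetCard]
        exact ⟨subset_univ _, by rw [card_insert_of_notMem ha, hcard]⟩
      have hstep := projCount_step X u a ha x
      have : (projCount X u x : ℝ) = ∑ v : Fin q, (projCount X (insert a u)
          (fun j => if h : (j : Fin s) ∈ u then x ⟨j, h⟩ else v) : ℝ) := by
        rw [hstep]; push_cast; rfl
      rw [this]
      have hval : ∀ v : Fin q, (projCount X (insert a u)
          (fun j => if h : (j : Fin s) ∈ u then x ⟨j, h⟩ else v) : ℝ)
          = (n : ℝ) / (q : ℝ) ^ (j + 1) :=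
        fun v => ih (j + 1) (by omega) (insert a u) hins _
      rw [Finset.sum_congr rfl fun v _ => hval v, Finset.sum_const, Finset.card_univ,
        Fintype.card_fin, nsmul_eq_mul]
      rw [pow_succ]
      field_simp
  intro j hj
  exact key (t - j) j (by omega)

/-- Theorem 2 (second part): a lattice design has orthogonal strength `t`
(all level combinations appear `n/qᵗ` times in every `t`-factor projection)
if and only if Ψ_C(X; j) = 0 for j = 1, …, t. -/
theorem strength_iff_psiC_zero (n s q : ℕ) (hq : 2 ≤ q)
    (X : Fin n → Fin s → Fin q) (t : ℕ) (ht1 : 1 ≤ t) (hts : t ≤ s) :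
    (∀ u ∈ powersetCard t (univ : Finset (Fin s)), ∀ x : ↥u → Fin q,
        (projCount X u x : ℝ) = (n : ℝ) / (q : ℝ) ^ t) ↔
      (∀ j, 1 ≤ j → j ≤ t → PsiC X j = 0) := by
  have hq0 : (q : ℝ) ≠ 0 := by positivity
  constructor
  · intro hU j _ hjt
    rw [psiC_eq_sum_sq hq0]
    apply Finset.sum_eq_zero
    intro u hu
    apply Finset.sum_eq_zero
    intro x _
    rw [strength_mono hq0 X t hts hU j hjt u hu x]
    ring
  · intro hPsi u hu x
    have h := hPsi t ht1 le_rfl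
    rw [psiC_eq_sum_sq hq0] at h
    have h1 := (Finset.sum_eq_zero_iff_of_nonneg
      (fun u _ => Finset.sum_nonneg fun x _ => sq_nonneg _)).1 h.symm.symm u hu
    have h2 := (Finset.sum_eq_zero_iff_of_nonneg
      (fun x _ => sq_nonneg _)).1 h1 x (mem_univ _)
    have := sq_eq_zero_iff.1 h2
    linarith [sub_eq_zero.1 this]
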